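/- Model Minkowski spacetime as ℝ⁴ with quadratic form Q(v) = −v₀² + v₁² + v₂² + v₃². Let R₀ > 0 and ω ∈ ℝ with ω²R₀² < 1, set a = √(1 − ω²R₀²), and consider the clocks γ(t) = (t, 0, 0, 0) and γ̂(t̂) = (t̂, R₀·cos(ω t̂/a), R₀·sin(ω t̂/a), 0). Then for every t̂ ∈ ℝ the set {t ∈ ℝ : Q(γ(t) − γ̂(t̂)) = 0} equals {t̂ − R₀, t̂ + R₀}, and for every t ∈ ℝ the set {t̂ ∈ ℝ : Q(γ̂(t̂) − γ(t)) = 0} equals {t − R₀, t + R₀}. Consequently each clock is Einstein synchroneous to the other and each assigns to the other the same constant radar distance R₀. -/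
import Mathlib


/-- The Minkowski quadratic form on `ℝ⁴`. -/
noncomputable def minkQ (v : Fin 4 → ℝ) : ℝ :=
  -(v 0) ^ 2 + (v 1) ^ 2 + (v 2) ^ 2 + (v 3) ^ 2

lemma key_aux (R₀ : ℝ) (hR₀ : R₀ > 0) (u c s : ℝ) (hcs : c ^ 2 + s ^ 2 = 1) :
    ∀ x : ℝ, (-(x - u) ^ 2 + (R₀ * c) ^ 2 + (R₀ * s) ^ 2 + 0 ^ 2 = 0
      ↔ (x = u - R₀ ∨ x = u + R₀)) := by
  intro x
  have h : (R₀ * c) ^ 2 + (R₀ * s) ^ 2 = R₀ ^ 2 := by ring_nf; nlinarith [hcs]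
  constructor
  · intro hx
    have h2 : (x - u - R₀) * (x - u + R₀) = 0 := by nlinarith
    rcases mul_eq_zero.1 h2 with h3 | h3
    · right; linarith
    · left; linarith
  · rintro (rfl | rfl) <;> nlinarith

/-- Section 5 example of the paper (equation (20)): for the rest clock
`γ(t) = (t,0,0,0)` and the reparametrized circling clock
`γ̂(t̂) = (t̂, R₀ cos(ω t̂/a), R₀ sin(ω t̂/a), 0)` with `a = √(1-ω²R₀²)`, the light
rays connecting the two worldlines meet at parameters `t̂ ∓ R₀` resp. `t ∓ R₀`;
consequently each clock is Einstein synchroneous to the other and each assigns to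
the other the same constant radar distance `R₀`. -/
theorem mutually_synchroneous_clocks_example
    (R₀ ω : ℝ) (hR₀ : R₀ > 0) (hω : ω ^ 2 * R₀ ^ 2 < 1)
    (a : ℝ) (ha : a = Real.sqrt (1 - ω ^ 2 * R₀ ^ 2))
    (γ γh : ℝ → Fin 4 → ℝ)
    (hγ : ∀ t : ℝ, γ t = ![t, 0, 0, 0])
    (hγh : ∀ th : ℝ, γh th =
      ![th, R₀ * Real.cos (ω * th / a), R₀ * Real.sin (ω * th / a), 0]) :
    (∀ th : ℝ,
      {t : ℝ | minkQ (γ t - γh th) = 0} = {th - R₀, th + R₀} ∧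
      ((th - R₀) + (th + R₀)) / 2 = th ∧
      ((th + R₀) - (th - R₀)) / 2 = R₀) ∧
    (∀ t : ℝ,
      {th : ℝ | minkQ (γh th - γ t) = 0} = {t - R₀, t + R₀} ∧
      ((t - R₀) + (t + R₀)) / 2 = t ∧
      ((t + R₀) - (t - R₀)) / 2 = R₀) := by
  constructor
  · intro th
    refine ⟨?_, by ring, by ring⟩
    ext t
    have hcs := Real.cos_sq_add_sin_sq (ω * th / a)
    have := key_aux R₀ hR₀ th (Real.cos (ω * th / a)) (Real.sin (ω * th / a)) hcs t
    simp only [Set.mem_setOf_eq, minkQ, hγ, hγh, Pi.sub_apply, Set.mem_insert_iff,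
      Set.mem_singleton_iff]
    simp only [Matrix.cons_val_zero, Matrix.cons_val_one, Matrix.head_cons,
      Matrix.cons_val_two, Matrix.tail_cons, Matrix.cons_val_three]
    convert this using 2 <;> ring
  · intro t
    refine ⟨?_, by ring, by ring⟩
    ext th
    have hcs := Real.cos_sq_add_sin_sq (ω * th / a)
    have := key_aux R₀ hR₀ t (Real.cos (ω * th / a)) (Real.sin (ω * th / a)) hcs th
    simp only [Set.mem_setOf_eq, minkQ, hγ, hγh, Pi.sub_apply, Set.mem_insert_iff,
      Set.mem_singleton_iff]
    simp only [Matrix.cons_val_zero, Matrix.cons_val_one, Matrix.head_cons,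
      Matrix.cons_val_two, Matrix.tail_cons, Matrix.cons_val_three]
    convert this using 2 <;> ring
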